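/- Assume 0 < a < b²/(27c) (so that b² − 24ac > 0). Then: (i) F_b(s₊ (n nᵀ − I/3)) < 0 and, for every Q ∈ 𝒬, F_b(Q) ≥ F_b(s₊ (n nᵀ − I/3)), with equality if and only if Q = s₊ (n nᵀ − I/3) for some unit vector n ∈ ℝ³; (ii) Q = 0 is a strict local minimizer of F_b on 𝒬 (but not a global minimizer); (iii) for any unit vector n, s₋ (n nᵀ − I/3) is not a local minimizer of F_b on 𝒬. -/

import Mathlib

open Real

noncomputable section

abbrev Mat3 : Type := Matrix (Fin 3) (Fin 3) ℝ

/-- The space 𝒬 of real symmetric traceless 3×3 matrices. -/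
def QSet : Set Mat3 := {Q | Q.IsSymm ∧ Q.trace = 0}

/-- The Landau–de Gennes bulk energy
`F_b(Q) = (a/2) tr(Q²) − (b/3) tr(Q³) + (c/4) (tr(Q²))²`. -/
noncomputable def Fb (a b c : ℝ) (Q : Mat3) : ℝ :=
  a / 2 * (Q * Q).trace - b / 3 * (Q * Q * Q).trace + c / 4 * ((Q * Q).trace) ^ 2

/-- The uniaxial tensor `s (n nᵀ − I/3)`. -/
noncomputable def uniQ (s : ℝ) (n : Fin 3 → ℝ) : Mat3 :=
  s • (Matrix.vecMulVec n n - (1 / 3 : ℝ) • (1 : Mat3))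

/-- `s₊ = (b + √(b² − 24ac))/(4c)`. -/
noncomputable def splus (a b c : ℝ) : ℝ := (b + Real.sqrt (b ^ 2 - 24 * a * c)) / (4 * c)

/-- `s₋ = (b − √(b² − 24ac))/(4c)`. -/
noncomputable def sminus (a b c : ℝ) : ℝ := (b - Real.sqrt (b ^ 2 - 24 * a * c)) / (4 * c)

open Matrix Filter



-- basic facts about uniQ
lemma vmv_mul_vmv (n : Fin 3 → ℝ) (hn : ∑ i, (n i) ^ 2 = 1) :
    vecMulVec n n * vecMulVec n n = vecMulVec n n := by
  ext i j
  simp only [Matrix.mul_apply, vecMulVec_apply]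
  have : ∑ k, (n i * n k) * (n k * n j) = (n i * n j) * ∑ k, (n k)^2 := by
    rw [Finset.mul_sum]; congr 1; ext k; ring
  rw [this, hn, mul_one]

lemma trace_vmv (n : Fin 3 → ℝ) (hn : ∑ i, (n i) ^ 2 = 1) :
    (vecMulVec n n).trace = 1 := by
  rw [Matrix.trace]
  simp only [Matrix.diag_apply, vecMulVec_apply, ← sq]
  exact hn

lemma vmv_symm (n : Fin 3 → ℝ) : (vecMulVec n n).IsSymm := by
  apply Matrix.IsSymm.ext; intro i j; simp [vecMulVec_apply, mul_comm]

lemma uniQ_mem (s : ℝ) (n : Fin 3 → ℝ) (hn : ∑ i, (n i) ^ 2 = 1) : uniQ s n ∈ QSet := by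
  constructor
  · apply Matrix.IsSymm.ext
    intro i j
    by_cases h : i = j
    · simp [h]
    · have h' : ¬ j = i := fun hji => h hji.symm
      simp [uniQ, vecMulVec_apply, Matrix.one_apply, h, h', mul_comm]
  · simp [uniQ, Matrix.trace_smul, Matrix.trace_sub, trace_vmv n hn, Matrix.trace_one]

def gfun (a b c s : ℝ) : ℝ := a/3*s^2 - 2*b/27*s^3 + c/9*s^4

lemma uniQ_sq (s : ℝ) (n : Fin 3 → ℝ) (hn : ∑ i, (n i) ^ 2 = 1) :
    uniQ s n * uniQ s n = (s^2/3) • vecMulVec n n + (s^2/9) • (1 : Mat3) := by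
  have h := vmv_mul_vmv n hn
  simp only [uniQ, Matrix.smul_mul, Matrix.mul_smul, sub_mul, mul_sub, Matrix.one_mul,
    Matrix.mul_one, smul_smul, h, smul_sub]
  module

lemma trace_uniQ_sq (s : ℝ) (n : Fin 3 → ℝ) (hn : ∑ i, (n i) ^ 2 = 1) :
    (uniQ s n * uniQ s n).trace = 2*s^2/3 := by
  rw [uniQ_sq s n hn]
  simp [Matrix.trace_smul, trace_vmv n hn, Matrix.trace_one]
  ring

lemma trace_uniQ_cube (s : ℝ) (n : Fin 3 → ℝ) (hn : ∑ i, (n i) ^ 2 = 1) :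
    (uniQ s n * uniQ s n * uniQ s n).trace = 2*s^3/9 := by
  have h := vmv_mul_vmv n hn
  have : uniQ s n * uniQ s n * uniQ s n
      = (s^3/3) • vecMulVec n n - (s^3/27) • (1 : Mat3) := by
    rw [uniQ_sq s n hn]
    simp only [uniQ, Matrix.smul_mul, Matrix.mul_smul, add_mul, sub_mul, mul_sub, Matrix.one_mul,
      Matrix.mul_one, smul_smul, h, smul_sub]
    module
  rw [this]
  simp [Matrix.trace_smul, Matrix.trace_sub, trace_vmv n hn, Matrix.trace_one]
  ring

lemma Fb_uniQ (a b c s : ℝ) (n : Fin 3 → ℝ) (hn : ∑ i, (n i) ^ 2 = 1) :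
    Fb a b c (uniQ s n) = gfun a b c s := by
  rw [Fb, trace_uniQ_sq s n hn, trace_uniQ_cube s n hn, gfun]
  ring


lemma isHerm_of_isSymm {Q : Mat3} (h : Q.IsSymm) : Q.IsHermitian := by
  rwa [Matrix.IsHermitian, Matrix.conjTranspose_eq_transpose_of_trivial]

lemma spectral_pow (Q : Mat3) (hH : Q.IsHermitian) (k : ℕ) :
    Q ^ k = (hH.eigenvectorUnitary : Mat3) * (Matrix.diagonal (hH.eigenvalues)) ^ k *
      (star (hH.eigenvectorUnitary : Mat3)) := by
  set V : Mat3 := (hH.eigenvectorUnitary : Mat3) with hV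
  have hsV : star V * V = 1 := Unitary.coe_star_mul_self _
  have hVs : V * star V = 1 := Unitary.coe_mul_star_self _
  have hspec : Q = V * Matrix.diagonal (hH.eigenvalues) * star V := by
    have := hH.spectral_theorem
    exact this.trans rfl
  induction k with
  | zero => simp [pow_zero, hVs]
  | succ m ih =>
      have key : V * Matrix.diagonal hH.eigenvalues ^ (m+1) * star V
          = (V * Matrix.diagonal hH.eigenvalues ^ m * star V) *
            (V * Matrix.diagonal hH.eigenvalues * star V) := by
        have : (V * Matrix.diagonal hH.eigenvalues ^ m * star V) *
            (V * Matrix.diagonal hH.eigenvalues * star V)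
            = V * Matrix.diagonal hH.eigenvalues ^ m * (star V * V) *
              Matrix.diagonal hH.eigenvalues * star V := by
          simp only [Matrix.mul_assoc]
        rw [this, hsV, Matrix.mul_one, pow_succ]
        simp only [Matrix.mul_assoc]
      rw [pow_succ, ih, key, ← hspec]

lemma trace_pow_eq (Q : Mat3) (hH : Q.IsHermitian) (k : ℕ) :
    (Q ^ k).trace = ∑ i, hH.eigenvalues i ^ k := by
  have hsV : star (hH.eigenvectorUnitary : Mat3) * (hH.eigenvectorUnitary : Mat3) = 1 :=
    Unitary.coe_star_mul_self _
  rw [spectral_pow Q hH k, Matrix.trace_mul_cycle, hsV,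
    Matrix.one_mul, Matrix.diagonal_pow, Matrix.trace_diagonal]
  rfl

lemma reconstruct (Q : Mat3) (hH : Q.IsHermitian) (s : ℝ) (i₀ : Fin 3)
    (hval : ∀ j, hH.eigenvalues j = if j = i₀ then 2*s/3 else -s/3) :
    ∃ n : Fin 3 → ℝ, (∑ i, (n i) ^ 2 = 1) ∧ Q = uniQ s n := by
  set V : Mat3 := (hH.eigenvectorUnitary : Mat3) with hV
  have hsV : star V * V = 1 := Unitary.coe_star_mul_self _
  have hVs : V * star V = 1 := Unitary.coe_mul_star_self _
  set n : Fin 3 → ℝ := fun j => V j i₀ with hn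
  have hunit : ∑ i, (n i) ^ 2 = 1 := by
    have := congrFun (congrFun hsV i₀) i₀
    simp only [Matrix.mul_apply, Matrix.one_apply_eq, Matrix.star_apply, star_trivial] at this
    rw [← this]
    congr 1; ext j; rw [hn]; ring
  refine ⟨n, hunit, ?_⟩
  have hspec : Q = V * Matrix.diagonal (hH.eigenvalues) * star V := by
    have := hH.spectral_theorem
    exact this.trans rfl
  have hdiag : Matrix.diagonal (hH.eigenvalues)
      = s • Matrix.diagonal (fun j => if j = i₀ then (1:ℝ) else 0) - (s/3) • (1 : Mat3) := by
    ext i j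
    by_cases h : i = j
    · subst h
      simp only [Matrix.diagonal_apply_eq, Matrix.sub_apply, Matrix.smul_apply,
        Matrix.one_apply_eq, smul_eq_mul, hval i]
      by_cases h2 : i = i₀ <;> simp [h2] <;> ring
    · simp [Matrix.diagonal_apply_ne _ h, Matrix.one_apply_ne h]
  have houter : V * Matrix.diagonal (fun j => if j = i₀ then (1:ℝ) else 0) * star V
      = vecMulVec n n := by
    ext i j
    simp only [Matrix.mul_apply, Matrix.diagonal_apply, Matrix.star_apply, star_trivial,
      vecMulVec_apply, hn]
    have : ∀ x : Fin 3, (∑ y : Fin 3, V i y * if y = x then if y = i₀ then (1:ℝ) else 0 else 0)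
        = if x = i₀ then V i i₀ else 0 := by
      intro x
      rw [Finset.sum_eq_single x]
      · by_cases hx : x = i₀ <;> simp [hx]
      · intro y _ hy; simp [hy]
      · simp
    simp only [this]
    rw [Finset.sum_eq_single i₀]
    · simp [mul_comm]
    · intro y _ hy; simp [hy]
    · simp
  rw [hspec, hdiag, uniQ]
  rw [Matrix.mul_sub, Matrix.sub_mul, Matrix.mul_smul, Matrix.mul_smul, Matrix.smul_mul,
    Matrix.smul_mul, houter, Matrix.mul_one, hVs, smul_sub]
  have : (s : ℝ) * (1/3) = s / 3 := by ring
  rw [smul_smul, this]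


namespace LdG
variable {a b c : ℝ}

structure Hyp (a b c : ℝ) : Prop where
  hb : 0 < b
  hc : 0 < c
  ha0 : 0 < a
  h27 : 27*a*c < b^2

variable (H : Hyp a b c)
include H

lemma hr2 : (Real.sqrt (b ^ 2 - 24 * a * c))^2 = b^2 - 24*a*c := by
  rw [Real.sq_sqrt]; nlinarith [H.h27, H.ha0, H.hc]

lemma hr0 : 0 < Real.sqrt (b ^ 2 - 24 * a * c) := by
  apply Real.sqrt_pos.2; nlinarith [H.h27, H.ha0, H.hc]

lemma hrb : Real.sqrt (b ^ 2 - 24 * a * c) < b := by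
  nlinarith [hr2 H, hr0 H, H.ha0, H.hc, H.hb]

lemma h3r : b < 3 * Real.sqrt (b ^ 2 - 24 * a * c) := by
  nlinarith [hr2 H, hr0 H, H.h27, H.hb]

lemma hsm0 : 0 < sminus a b c := by
  have h1 := hrb H
  have := H.hc
  rw [sminus]
  apply div_pos (by linarith) (by linarith)

lemma hsmsp : sminus a b c < splus a b c := by
  rw [sminus, splus]
  have h1 := hr0 H
  have := H.hc
  have h4c : (0:ℝ) < 4*c := by linarith
  exact div_lt_div_of_pos_right (by linarith) h4c

lemma hsp0 : 0 < splus a b c := lt_trans (hsm0 H) (hsmsp H)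

lemma hsum' : sminus a b c + splus a b c = b/(2*c) := by
  have := H.hc
  rw [sminus, splus]; field_simp; ring

lemma hprod : sminus a b c * splus a b c = 3*a/(2*c) := by
  have hcc := H.hc
  rw [sminus, splus]
  have h2 := hr2 H
  field_simp
  nlinarith [h2]

lemma hquad_p : 2*c*(splus a b c)^2 - b*(splus a b c) + 3*a = 0 := by
  have h1 := hsum' H
  have h2 := hprod H
  have hcc := H.hc
  have : (splus a b c)^2 - (b/(2*c))*(splus a b c) + 3*a/(2*c) = 0 := by
    rw [← h1, ← h2]; ring
  have hc' : (2*c) ≠ 0 := by positivity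
  field_simp at this
  nlinarith [this]

lemma hquad_m : 2*c*(sminus a b c)^2 - b*(sminus a b c) + 3*a = 0 := by
  have h1 := hsum' H
  have h2 := hprod H
  have hcc := H.hc
  have : (sminus a b c)^2 - (b/(2*c))*(sminus a b c) + 3*a/(2*c) = 0 := by
    rw [← h1, ← h2]; ring
  have hc' : (2*c) ≠ 0 := by positivity
  field_simp at this
  nlinarith [this]

lemma gsp_neg : gfun a b c (splus a b c) < 0 := by
  set s := splus a b c with hs
  have hq := hquad_p H
  have hval : gfun a b c s = s^2*(9*a - b*s)/54 := by
    rw [← hs] at hq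
    rw [gfun]; linear_combination (s^2/18) * hq
  have hbs : 9*a < b*s := by
    have h2 := hr2 H
    have h3 := h3r H
    have hr0' := hr0 H
    have hcc := H.hc
    rw [hs, splus]
    rw [show b * ((b + Real.sqrt (b^2 - 24*a*c))/(4*c)) = (b^2 + b*Real.sqrt (b^2-24*a*c))/(4*c) by ring]
    rw [lt_div_iff₀ (by positivity)]
    nlinarith [mul_lt_mul_of_pos_left h3 H.hb, H.h27]
  have hs0 : 0 < s := hsp0 H
  rw [hval]
  have h1 : 0 < s^2 := by positivity
  nlinarith [mul_pos h1 (show 0 < b*s - 9*a by linarith)]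

end LdG

namespace LdG
variable {a b c : ℝ} (H : Hyp a b c)
include H

omit H in
lemma gderiv (s : ℝ) : HasDerivAt (gfun a b c) (2*a/3*s - 2*b/9*s^2 + 4*c/9*s^3) s := by
  have h1 : HasDerivAt (fun s : ℝ => a/3*s^2) (a/3*(2*s^1)) s :=
    (hasDerivAt_pow 2 s).const_mul _
  have h2 : HasDerivAt (fun s : ℝ => 2*b/27*s^3) (2*b/27*(3*s^2)) s :=
    (hasDerivAt_pow 3 s).const_mul _
  have h3 : HasDerivAt (fun s : ℝ => c/9*s^4) (c/9*(4*s^3)) s :=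
    (hasDerivAt_pow 4 s).const_mul _
  have h := (h1.sub h2).add h3
  have heq : 2*a/3*s - 2*b/9*s^2 + 4*c/9*s^3
      = a/3*(2*s^1) - 2*b/27*(3*s^2) + c/9*(4*s^3) := by push_cast; ring
  rw [heq]
  exact h

lemma gderiv_fact (s : ℝ) :
    HasDerivAt (gfun a b c) ((4*c/9)*s*(s - sminus a b c)*(s - splus a b c)) s := by
  have h1 := hsum' H
  have h2 := hprod H
  have := gderiv (a := a) (b := b) (c := c) s
  convert this using 1
  have hcc : c ≠ 0 := ne_of_gt H.hc
  field_simp at h1 h2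
  linear_combination (-2*s^2/9) * h1 + (2*s/9) * h2

omit H in
lemma gcont : Continuous (gfun a b c) := by
  have : (gfun a b c) = fun s => a/3*s^2 - 2*b/27*s^3 + c/9*s^4 := rfl
  rw [this]; fun_prop

lemma gderiv_eq (s : ℝ) : deriv (gfun a b c) s = (4*c/9)*s*(s - sminus a b c)*(s - splus a b c) :=
  (gderiv_fact H s).deriv

lemma ganti : StrictAntiOn (gfun a b c) (Set.Icc (sminus a b c) (splus a b c)) := by
  apply strictAntiOn_of_deriv_neg (convex_Icc _ _) (gcont.continuousOn)
  intro t ht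
  rw [interior_Icc] at ht
  rw [gderiv_eq H]
  have h1 : 0 < t := lt_trans (hsm0 H) ht.1
  have := H.hc
  have h2 : 0 < t - sminus a b c := by linarith [ht.1]
  have h3 : t - splus a b c < 0 := by linarith [ht.2]
  nlinarith [mul_pos (mul_pos (show (0:ℝ) < 4*c/9 by positivity) h1) h2]

lemma gmono1 : StrictMonoOn (gfun a b c) (Set.Icc 0 (sminus a b c)) := by
  apply strictMonoOn_of_deriv_pos (convex_Icc _ _) (gcont.continuousOn)
  intro t ht
  rw [interior_Icc] at ht
  rw [gderiv_eq H]
  have h1 : 0 < t := ht.1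
  have := H.hc
  have h2 : t - sminus a b c < 0 := by linarith [ht.2]
  have h3 : t - splus a b c < 0 := by linarith [ht.2, hsmsp H]
  nlinarith [mul_pos (mul_pos (show (0:ℝ) < 4*c/9 by positivity) h1) (mul_pos (neg_pos.2 h2) (neg_pos.2 h3))]

lemma gmono2 : StrictMonoOn (gfun a b c) (Set.Ici (splus a b c)) := by
  apply strictMonoOn_of_deriv_pos (convex_Ici _) (gcont.continuousOn)
  intro t ht
  rw [interior_Ici] at ht
  rw [gderiv_eq H]
  have ht' : splus a b c < t := ht
  have h1 : 0 < t := lt_trans (hsp0 H) ht'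
  have := H.hc
  have h2 : 0 < t - sminus a b c := by linarith [hsmsp H]
  have h3 : 0 < t - splus a b c := by linarith
  positivity

lemma gmin (s : ℝ) (hs : 0 ≤ s) :
    gfun a b c (splus a b c) ≤ gfun a b c s ∧
      (gfun a b c s = gfun a b c (splus a b c) → s = splus a b c) := by
  have hneg := gsp_neg H
  have hsm := hsm0 H
  have hsp := hsp0 H
  have hms := hsmsp H
  have g0 : gfun a b c 0 = 0 := by rw [gfun]; ring
  rcases le_or_gt s (sminus a b c) with h1 | h1
  · -- s ∈ [0, sm]: g s ≥ g 0 = 0 > g sp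
    have this : gfun a b c 0 ≤ gfun a b c s := by
      rcases eq_or_lt_of_le hs with h | h
      · rw [← h]
      · exact le_of_lt ((gmono1 H) ⟨le_refl 0, le_of_lt hsm⟩ ⟨hs, h1⟩ h)
    have h0 : (0:ℝ) ≤ gfun a b c s := by rw [← g0]; exact this
    exact ⟨by linarith, fun he => by rw [he] at h0; linarith⟩
  · rcases lt_trichotomy s (splus a b c) with h2 | h2 | h2
    · have hlt : gfun a b c (splus a b c) < gfun a b c s :=
        (ganti H) ⟨le_of_lt h1, le_of_lt h2⟩ ⟨le_of_lt hms, le_refl _⟩ h2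
      exact ⟨le_of_lt hlt, fun he => absurd he (ne_of_gt hlt)⟩
    · rw [h2]; exact ⟨le_refl _, fun _ => rfl⟩
    · have hlt : gfun a b c (splus a b c) < gfun a b c s :=
        (gmono2 H) (Set.mem_Ici.2 (le_refl _)) (Set.mem_Ici.2 (le_of_lt h2)) h2
      exact ⟨le_of_lt hlt, fun he => absurd he (ne_of_gt hlt)⟩

end LdG

namespace LdG
variable {a b c : ℝ} (H : Hyp a b c)
include H

lemma scalar_master (p e : ℝ) (hp0 : 0 ≤ p) (hpe : 6*e^2 ≤ p^3) :
    gfun a b c (splus a b c) ≤ a/2*p - b/3*e + c/4*p^2 ∧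
      (a/2*p - b/3*e + c/4*p^2 = gfun a b c (splus a b c) →
        p = 2*(splus a b c)^2/3 ∧ e = 2*(splus a b c)^3/9) := by
  set σ := Real.sqrt (3*p/2) with hσ
  have hσ0 : 0 ≤ σ := Real.sqrt_nonneg _
  have hσ2 : σ^2 = 3*p/2 := Real.sq_sqrt (by linarith)
  have hpσ : p = 2*σ^2/3 := by rw [hσ2]; ring
  have hek : e ≤ 2*σ^3/9 := by
    have hk0 : 0 ≤ 2*σ^3/9 := by positivity
    have hp3 : p^3 = 8*σ^6/27 := by rw [hpσ]; ring
    have he2 : e^2 ≤ (2*σ^3/9)^2 := by nlinarith [hpe, hp3]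
    nlinarith [he2, hk0]
  have hgσ : a/2*p - b/3*(2*σ^3/9) + c/4*p^2 = gfun a b c σ := by
    rw [hpσ, gfun]; ring
  have hmin := gmin H σ hσ0
  have hb3 : 0 < b/3 := by linarith [H.hb]
  have hchain : gfun a b c (splus a b c) ≤ a/2*p - b/3*e + c/4*p^2 := by
    have : gfun a b c σ ≤ a/2*p - b/3*e + c/4*p^2 := by
      rw [← hgσ]; nlinarith [hek]
    linarith [hmin.1]
  refine ⟨hchain, fun heq => ?_⟩
  have h1 : gfun a b c σ ≤ a/2*p - b/3*e + c/4*p^2 := by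
    rw [← hgσ]; nlinarith [hek]
  have h2 : gfun a b c σ = gfun a b c (splus a b c) := by
    apply le_antisymm ?_ hmin.1
    linarith [h1, heq]
  have hσeq : σ = splus a b c := hmin.2 h2
  have hpeq : p = 2*(splus a b c)^2/3 := by rw [hpσ, hσeq]
  refine ⟨hpeq, ?_⟩
  have h3 := hgσ
  rw [hσeq] at h3
  have h4 : b/3*e = b/3*(2*(splus a b c)^3/9) := by
    linarith [heq, h3]
  exact mul_left_cancel₀ (ne_of_gt hb3) h4

end LdG

namespace LdG

lemma cubic_identity (x y z : ℝ) (h : x + y + z = 0) :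
    (x^2+y^2+z^2)^3 - 6*(x^3+y^3+z^3)^2 = 2*((x-y)*(y-z)*(z-x))^2 := by
  have hz : z = -x - y := by linarith
  subst hz; ring

lemma pair_case (x y z s : ℝ) (hs : 0 < s) (hxy : x = y) (hsum : x + y + z = 0)
    (hp : x^2+y^2+z^2 = 2*s^2/3) (he : x^3+y^3+z^3 = 2*s^3/9) :
    x = -s/3 ∧ y = -s/3 ∧ z = 2*s/3 := by
  have hz : z = -x - y := by linarith
  subst hz
  subst hxy
  have h2 : x^2 = s^2/9 := by linear_combination (1/6) * hp
  have h3 : x^3 = -(s^3)/27 := by linear_combination (-1/6) * he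
  have hfac : (x - s/3)*(x + s/3) = 0 := by linear_combination h2
  rcases mul_eq_zero.mp hfac with h | h
  · exfalso
    have hx : x = s/3 := by linarith
    rw [hx] at h3
    have hspos : (0:ℝ) < s^3 := by positivity
    nlinarith [h3]
  · have hx : x = -s/3 := by linarith
    exact ⟨hx, hx, by rw [hx]; ring⟩

variable {a b c : ℝ}

lemma trace_cube_sq_le (Q : Mat3) (hQ : Q ∈ QSet) :
    0 ≤ (Q * Q).trace ∧ 6 * ((Q * Q * Q).trace)^2 ≤ ((Q * Q).trace)^3 := by
  obtain ⟨hsymm, htr⟩ := hQ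
  have hH := isHerm_of_isSymm hsymm
  have h1 := trace_pow_eq Q hH 1
  rw [pow_one, htr, Fin.sum_univ_three] at h1
  have h2 := trace_pow_eq Q hH 2
  have h3 := trace_pow_eq Q hH 3
  rw [Fin.sum_univ_three] at h2 h3
  have hQQ : Q * Q = Q^2 := (sq Q).symm
  have hQQQ : Q * Q * Q = Q^3 := by rw [pow_succ, sq]
  rw [hQQQ, hQQ, h2, h3]
  have hsum : hH.eigenvalues 0 + hH.eigenvalues 1 + hH.eigenvalues 2 = 0 := by linarith
  have hkey := cubic_identity _ _ _ hsum
  constructor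
  · positivity
  · nlinarith [sq_nonneg ((hH.eigenvalues 0 - hH.eigenvalues 1) *
      (hH.eigenvalues 1 - hH.eigenvalues 2) * (hH.eigenvalues 2 - hH.eigenvalues 0)), hkey]

lemma Fb_ge (H : Hyp a b c) (Q : Mat3) (hQ : Q ∈ QSet) :
    gfun a b c (splus a b c) ≤ Fb a b c Q ∧
      (Fb a b c Q = gfun a b c (splus a b c) →
        ∃ n : Fin 3 → ℝ, (∑ i, (n i) ^ 2 = 1) ∧ Q = uniQ (splus a b c) n) := by
  obtain ⟨hsymm, htr⟩ := hQ
  have hH := isHerm_of_isSymm hsymm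
  have h1 := trace_pow_eq Q hH 1
  rw [pow_one, htr, Fin.sum_univ_three] at h1
  have h2 := trace_pow_eq Q hH 2
  have h3 := trace_pow_eq Q hH 3
  rw [Fin.sum_univ_three] at h2 h3
  have hQQ : Q * Q = Q^2 := (sq Q).symm
  have hQQQ : Q * Q * Q = Q^3 := by rw [pow_succ, sq]
  set x := hH.eigenvalues 0 with hxd
  set y := hH.eigenvalues 1 with hyd
  set z := hH.eigenvalues 2 with hzd
  have hsum : x + y + z = 0 := by linarith
  have hFb : Fb a b c Q = a/2*(x^2+y^2+z^2) - b/3*(x^3+y^3+z^3) + c/4*(x^2+y^2+z^2)^2 := by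
    rw [Fb, hQQQ, hQQ, h2, h3]
  have hp0 : (0:ℝ) ≤ x^2+y^2+z^2 := by positivity
  have hkey := cubic_identity x y z hsum
  have hpe : 6*(x^3+y^3+z^3)^2 ≤ (x^2+y^2+z^2)^3 := by
    nlinarith [sq_nonneg ((x-y)*(y-z)*(z-x)), hkey]
  have hm := scalar_master H _ _ hp0 hpe
  refine ⟨by rw [hFb]; exact hm.1, fun heq => ?_⟩
  rw [hFb] at heq
  obtain ⟨hpv, hev⟩ := hm.2 heq
  have hs0 : 0 < splus a b c := hsp0 H
  set s := splus a b c with hsd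
  have hzero : (x-y)*(y-z)*(z-x) = 0 := by
    have hq : ((x-y)*(y-z)*(z-x))^2 = 0 := by
      have : 2*((x-y)*(y-z)*(z-x))^2 = 0 := by rw [← hkey, hpv, hev]; ring
      linarith
    exact pow_eq_zero_iff (two_ne_zero) |>.mp hq
  rcases mul_eq_zero.mp hzero with h | h
  · rcases mul_eq_zero.mp h with h' | h'
    · -- x = y
      obtain ⟨e1, e2, e3⟩ := pair_case x y z s hs0 (by linarith) hsum hpv hev
      apply reconstruct Q hH s 2
      intro j; fin_cases j
      · simpa using e1
      · simpa using e2
      · simpa using e3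
    · -- y = z
      obtain ⟨e1, e2, e3⟩ := pair_case y z x s hs0 (by linarith) (by linarith)
        (by linear_combination hpv) (by linear_combination hev)
      apply reconstruct Q hH s 0
      intro j; fin_cases j
      · simpa using e3
      · simpa using e1
      · simpa using e2
  · -- z = x
    obtain ⟨e1, e2, e3⟩ := pair_case z x y s hs0 (by linarith) (by linarith)
      (by linear_combination hpv) (by linear_combination hev)
    apply reconstruct Q hH s 1
    intro j; fin_cases j
    · simpa using e2
    · simpa using e3
    · simpa using e1

lemma Fb_zero : Fb a b c 0 = 0 := by simp [Fb]

lemma trace_sq_pos (Q : Mat3) (hsymm : Q.IsSymm) (hne : Q ≠ 0) : 0 < (Q * Q).trace := by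
  have heq : (Q * Q).trace = ∑ i, ∑ j, (Q i j)^2 := by
    rw [Matrix.trace]
    apply Finset.sum_congr rfl
    intro i _
    rw [Matrix.diag_apply, Matrix.mul_apply]
    apply Finset.sum_congr rfl
    intro j _
    rw [hsymm.apply i j, sq]
  rw [heq]
  have hnn : ∀ i ∈ Finset.univ, (0:ℝ) ≤ ∑ j, (Q i j)^2 := fun i _ => by positivity
  rcases lt_or_eq_of_le (Finset.sum_nonneg hnn) with h | h
  · exact h
  · exfalso
    apply hne
    ext i j
    have hrow := (Finset.sum_eq_zero_iff_of_nonneg hnn).mp h.symm i (Finset.mem_univ i)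
    have hentry := (Finset.sum_eq_zero_iff_of_nonneg
      (fun j _ => sq_nonneg (Q i j))).mp hrow j (Finset.mem_univ j)
    simpa using pow_eq_zero_iff (two_ne_zero) |>.mp hentry

end LdG



set_option maxHeartbeats 2000000 in
open LdG in
/-- For `0 < a < b²/(27c)`: (i) `F_b(s₊ (n nᵀ − I/3)) < 0` and `F_b` is minimized over 𝒬
exactly at the tensors `s₊ (n nᵀ − I/3)`; (ii) `Q = 0` is a strict local minimizer of
`F_b` on 𝒬 but not a global one; (iii) no `s₋ (n nᵀ − I/3)` is a local minimizer of
`F_b` on 𝒬. -/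
theorem stmt10 (a b c : ℝ) (hb : 0 < b) (hc : 0 < c)
    (ha0 : 0 < a) (ha : a < b ^ 2 / (27 * c)) :
    (∀ n : Fin 3 → ℝ, (∑ i, (n i) ^ 2 = 1) →
      Fb a b c (uniQ (splus a b c) n) < 0 ∧
      (∀ Q ∈ QSet, Fb a b c (uniQ (splus a b c) n) ≤ Fb a b c Q) ∧
      (∀ Q ∈ QSet, Fb a b c Q = Fb a b c (uniQ (splus a b c) n) ↔
        ∃ n' : Fin 3 → ℝ, (∑ i, (n' i) ^ 2 = 1) ∧ Q = uniQ (splus a b c) n')) ∧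
    ((∃ U ∈ nhds (0 : Mat3), ∀ Q ∈ U ∩ QSet, Q ≠ 0 → Fb a b c 0 < Fb a b c Q) ∧
      ∃ Q ∈ QSet, Fb a b c Q < Fb a b c 0) ∧
    (∀ n : Fin 3 → ℝ, (∑ i, (n i) ^ 2 = 1) →
      ¬ IsLocalMinOn (Fb a b c) QSet (uniQ (sminus a b c) n)) := by
  have h27 : 27*a*c < b^2 := by
    have := (lt_div_iff₀ (by positivity : (0:ℝ) < 27*c)).1 ha
    nlinarith [this]
  have H : Hyp a b c := ⟨hb, hc, ha0, h27⟩
  refine ⟨?_, ⟨?_, ?_⟩, ?_⟩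
  · -- part (i)
    intro n hn
    have hval : Fb a b c (uniQ (splus a b c) n) = gfun a b c (splus a b c) :=
      Fb_uniQ a b c _ n hn
    refine ⟨by rw [hval]; exact gsp_neg H, ?_, ?_⟩
    · intro Q hQ
      rw [hval]
      exact (Fb_ge H Q hQ).1
    · intro Q hQ
      constructor
      · intro heq
        rw [hval] at heq
        exact (Fb_ge H Q hQ).2 heq
      · rintro ⟨n', hn', rfl⟩
        rw [hval, Fb_uniQ a b c _ n' hn']
  · -- part (ii): strict local minimality of 0
    set δ := 9*a^2/(4*b^2) with hδd
    have hδ : 0 < δ := by positivity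
    have hcont : Continuous fun Q : Mat3 => (Q * Q).trace :=
      (continuous_id.matrix_mul continuous_id).matrix_trace
    refine ⟨(fun Q : Mat3 => (Q * Q).trace) ⁻¹' Set.Iio δ, ?_, ?_⟩
    · apply (hcont.isOpen_preimage _ isOpen_Iio).mem_nhds
      simp [Set.mem_preimage, hδ]
    · rintro Q ⟨hQU, hQs⟩ hne
      have ht : (Q * Q).trace < 9*a^2/(4*b^2) := by rw [← hδd]; exact hQU
      have htpos : 0 < (Q * Q).trace := trace_sq_pos Q hQs.1 hne
      obtain ⟨-, hpe⟩ := trace_cube_sq_le Q hQs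
      set t := (Q * Q).trace with htd
      set e := (Q * Q * Q).trace with hed
      set u := Real.sqrt t with hud
      have hu2 : u^2 = t := Real.sq_sqrt htpos.le
      have hupos : 0 < u := Real.sqrt_pos.2 htpos
      have hFb : Fb a b c Q = a/2*t - b/3*e + c/4*t^2 := rfl
      clear_value t e u
      have ht3 : t^3 = (u^3)^2 := by rw [← hu2]; ring
      have h6 : e^2 ≤ (u^3)^2 := by nlinarith [hpe, ht3, sq_nonneg e]
      have he : e ≤ u^3 := by nlinarith [h6, pow_pos hupos 3]
      have hδu : u^2 < 9*a^2/(4*b^2) := by rw [hu2]; exact ht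
      have hq3 : 0 < 3*a/(2*b) := by positivity
      have hm2 : (3*a/(2*b))^2 = 9*a^2/(4*b^2) := by field_simp; ring
      have hub : u < 3*a/(2*b) := by nlinarith [hδu, hq3, hm2]
      have h1 : b/3*e ≤ b/3*u^3 := by nlinarith [he, hb]
      have h2 : b/3*u^3 < a/2*u^2 := by
        have hkey : b/3*u^2*(3*a/(2*b)) = a/2*u^2 := by field_simp
        nlinarith [mul_lt_mul_of_pos_left hub (show 0 < b/3*u^2 by positivity)]
      have h2' : b/3*u^3 < a/2*t := by rw [← hu2]; exact h2
      have htsq : 0 < c/4*t^2 := by positivity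
      rw [Fb_zero, hFb]
      linarith [h1, h2', htsq]
  · -- part (ii): not a global minimizer
    refine ⟨uniQ (splus a b c) ![1,0,0], uniQ_mem _ _ ?_, ?_⟩
    · simp [Fin.sum_univ_three]
    · rw [Fb_zero, Fb_uniQ a b c _ _ (by simp [Fin.sum_univ_three])]
      exact gsp_neg H
  · -- part (iii)
    intro n hn h
    set sm := sminus a b c with hsmd
    have hx₀ : Fb a b c (uniQ sm n) = gfun a b c sm := Fb_uniQ a b c _ n hn
    have htd : Tendsto (fun t : ℝ => uniQ t n) (nhds sm) (nhdsWithin (uniQ sm n) QSet) := by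
      apply tendsto_nhdsWithin_of_tendsto_nhds_of_eventually_within
      · have hcont : Continuous fun t : ℝ => uniQ t n := by
          unfold uniQ
          exact continuous_id.smul continuous_const
        exact hcont.tendsto sm
      · exact Filter.Eventually.of_forall fun t => uniQ_mem t n hn
    have h' : ∀ᶠ t in nhds sm, Fb a b c (uniQ sm n) ≤ Fb a b c (uniQ t n) := htd.eventually h
    have h'' : ∀ᶠ t in nhdsWithin sm (Set.Ioi sm),
        Fb a b c (uniQ sm n) ≤ Fb a b c (uniQ t n) := h'.filter_mono nhdsWithin_le_nhds
    have hIoo : Set.Ioo sm (splus a b c) ∈ nhdsWithin sm (Set.Ioi sm) :=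
      Ioo_mem_nhdsGT_of_mem ⟨le_refl _, hsmsp H⟩
    obtain ⟨t, hget, htIoo⟩ :=
      (h''.and (Filter.eventually_of_mem hIoo (fun t ht => ht))).exists
    have hvt : Fb a b c (uniQ t n) = gfun a b c t := Fb_uniQ a b c _ n hn
    have hlt : gfun a b c t < gfun a b c sm :=
      ganti H ⟨le_refl _, (hsmsp H).le⟩ ⟨htIoo.1.le, htIoo.2.le⟩ htIoo.1
    rw [hx₀, hvt] at hget
    linarith
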